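/- Let r ≥ s ≥ 0 be natural numbers with r ≥ 1 and let S, T ⊆ {0,1}^n be nonempty. Then log₂( Σ_{x∈S} Σ_{y∈T} r^{a(x,y)} s^{d(x,y)} ) ≤ n(log₂(r+s) − s/r) + ((r+s)/(2r))(log₂|S| + log₂|T|), where a(x,y) and d(x,y) count agreements and disagreements of coordinates. -/

import Mathlib

open Finset Real

/-- Number of coordinates on which `x` and `y` agree. -/
def agree {n : ℕ} (x y : Fin n → Bool) : ℕ := (Finset.univ.filter (fun i => x i = y i)).card


lemma two_le_add_of_one_le_mul {a b : ℝ} (ha : 0 < a) (hb : 0 < b) (hab : 1 ≤ a * b) :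
    2 ≤ a + b := by nlinarith [sq_nonneg (a - 1), sq_nonneg (a - b)]

-- pointwise: for β ≤ 0, t ∈ (0,1): (1+t)^β + (1-t)^β ≥ 2
lemma pt_aux {β t : ℝ} (hβ : β ≤ 0) (ht0 : 0 < t) (ht1 : t < 1) :
    2 ≤ (1+t) ^ β + (1-t) ^ β := by
  have h1 : (0:ℝ) < 1 + t := by linarith
  have h2 : (0:ℝ) < 1 - t := by linarith
  have ha : (0:ℝ) < (1+t) ^ β := rpow_pos_of_pos h1 β
  have hb : (0:ℝ) < (1-t) ^ β := rpow_pos_of_pos h2 β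
  have hmul : (1:ℝ) ≤ (1+t) ^ β * (1-t) ^ β := by
    rw [← Real.mul_rpow h1.le h2.le]
    have hx : (0:ℝ) < (1+t) * (1-t) := mul_pos h1 h2
    have hx1 : (1+t) * (1-t) ≤ 1 := by nlinarith
    exact Real.one_le_rpow_of_pos_of_le_one_of_nonpos hx hx1 hβ
  exact two_le_add_of_one_le_mul ha hb hmul

lemma mono_aux {f f' : ℝ → ℝ} (hc : ContinuousOn f (Set.Icc 0 1))
    (hd : ∀ t ∈ Set.Ioo (0:ℝ) 1, HasDerivAt f (f' t) t)
    (h0 : ∀ t ∈ Set.Ioo (0:ℝ) 1, 0 ≤ f' t) {x : ℝ} (hx0 : 0 ≤ x) (hx1 : x ≤ 1) :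
    f 0 ≤ f x := by
  have hmono : MonotoneOn f (Set.Icc 0 1) := by
    apply monotoneOn_of_deriv_nonneg (convex_Icc 0 1) hc
    · intro t ht
      rw [interior_Icc] at ht
      exact (hd t ht).differentiableAt.differentiableWithinAt
    · intro t ht
      rw [interior_Icc] at ht
      rw [(hd t ht).deriv]
      exact h0 t ht
  exact hmono (by constructor <;> norm_num) ⟨hx0, hx1⟩ hx0

lemma cont1 {q : ℝ} (hq : 0 ≤ q) : ContinuousOn (fun t : ℝ => (1+t) ^ q) (Set.Icc 0 1) :=
  (continuousOn_const.add continuousOn_id).rpow_const (fun x _ => Or.inr hq)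

lemma cont2 {q : ℝ} (hq : 0 ≤ q) : ContinuousOn (fun t : ℝ => (1-t) ^ q) (Set.Icc 0 1) :=
  (continuousOn_const.sub continuousOn_id).rpow_const (fun x _ => Or.inr hq)

lemma deriv1 {q t : ℝ} (ht : t ∈ Set.Ioo (0:ℝ) 1) :
    HasDerivAt (fun t : ℝ => (1+t) ^ q) (q * (1+t) ^ (q-1)) t := by
  have h : HasDerivAt (fun t : ℝ => 1 + t) 1 t := (hasDerivAt_id t).const_add 1
  have := h.rpow_const (p := q) (Or.inl (by rcases ht with ⟨h1, h2⟩; nlinarith : (1:ℝ)+t ≠ 0))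
  simpa using this

lemma deriv2 {q t : ℝ} (ht : t ∈ Set.Ioo (0:ℝ) 1) :
    HasDerivAt (fun t : ℝ => (1-t) ^ q) (-(q * (1-t) ^ (q-1))) t := by
  have h : HasDerivAt (fun t : ℝ => 1 - t) (-1) t := (hasDerivAt_id t).const_sub 1
  have := h.rpow_const (p := q) (Or.inl (by rcases ht with ⟨h1, h2⟩; nlinarith : (1:ℝ)-t ≠ 0))
  · convert this using 1
    ring

lemma psi_nonneg {q : ℝ} (hq0 : 0 ≤ q) (hq1 : q ≤ 1) {x : ℝ} (hx0 : 0 ≤ x) (hx1 : x ≤ 1) :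
    2*q*x ≤ (1+x) ^ q - (1-x) ^ q := by
  have key : ∀ y ∈ Set.Icc (0:ℝ) 1, (fun t => (1+t)^q - (1-t)^q - 2*q*t) 0 ≤
      (fun t => (1+t)^q - (1-t)^q - 2*q*t) y := by
    intro y hy
    apply mono_aux (f := fun t => (1+t)^q - (1-t)^q - 2*q*t) (f' := fun t => q * (1+t) ^ (q-1) + q * (1-t) ^ (q-1) - 2*q)
    · exact ((cont1 hq0).sub (cont2 hq0)).sub (continuousOn_const.mul continuousOn_id)
    · intro t ht
      have hlin : HasDerivAt (fun t : ℝ => 2*q*t) (2*q) t := by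
        simpa using (hasDerivAt_id t).const_mul (2*q)
      have := ((deriv1 (q := q) ht).sub (deriv2 (q := q) ht)).sub hlin
      exact this.congr_deriv (by ring)
    · intro t ht
      have h2 := pt_aux (β := q - 1) (by linarith) ht.1 ht.2
      nlinarith [h2]
    · exact hy.1
    · exact hy.2
  have := key x ⟨hx0, hx1⟩
  simp only [add_zero, sub_zero, Real.one_rpow, mul_zero] at this
  linarith

lemma lemB {p : ℝ} (hp1 : 1 ≤ p) (hp2 : p ≤ 2) {x : ℝ} (hx0 : 0 ≤ x) (hx1 : x ≤ 1) :
    2 + p*(p-1)*x^2 ≤ (1+x) ^ p + (1-x) ^ p := by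
  have hp0 : (0:ℝ) ≤ p := by linarith
  have key : ∀ y ∈ Set.Icc (0:ℝ) 1, (fun t => (1+t)^p + (1-t)^p - 2 - p*(p-1)*t^2) 0 ≤
      (fun t => (1+t)^p + (1-t)^p - 2 - p*(p-1)*t^2) y := by
    intro y hy
    apply mono_aux (f := fun t => (1+t)^p + (1-t)^p - 2 - p*(p-1)*t^2) (f' := fun t => p * (1+t) ^ (p-1) - p * (1-t) ^ (p-1) - 2*p*(p-1)*t)
    · exact (((cont1 hp0).add (cont2 hp0)).sub continuousOn_const).sub
        (continuousOn_const.mul (continuousOn_id.pow 2))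
    · intro t ht
      have hsq : HasDerivAt (fun t : ℝ => p*(p-1)*t^2) (p*(p-1)*(2*t)) t := by
        simpa using ((hasDerivAt_pow 2 t).const_mul (p*(p-1)))
      have := (((deriv1 (q := p) ht).add (deriv2 (q := p) ht)).sub (hasDerivAt_const t 2)).sub hsq
      exact this.congr_deriv (by ring)
    · intro t ht
      have := psi_nonneg (q := p - 1) (by linarith) (by linarith) ht.1.le ht.2.le
      nlinarith [this]
    · exact hy.1
    · exact hy.2
  have := key x ⟨hx0, hx1⟩
  simp only [add_zero, sub_zero, Real.one_rpow] at this
  nlinarith [this]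

lemma step2_eps {p ε : ℝ} (hp1 : 1 ≤ p) (hp2 : p ≤ 2) (hε0 : 0 ≤ ε) (hε1 : ε ≤ 1) :
    1 + (p-1)*ε^2 ≤ (((1+ε) ^ p + (1-ε) ^ p)/2) ^ (2/p) := by
  have hp0 : (0:ℝ) < p := by linarith
  set W : ℝ := ((1+ε) ^ p + (1-ε) ^ p)/2 with hW
  have hWnn : 0 ≤ W := by
    have := Real.rpow_nonneg (by linarith : (0:ℝ) ≤ 1+ε) p
    have := Real.rpow_nonneg (by linarith : (0:ℝ) ≤ 1-ε) p
    simp only [hW]; positivity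
  have hbase : (0:ℝ) ≤ 1 + (p-1)*ε^2 := by nlinarith
  have hbern : (1 + (p-1)*ε^2) ^ (p/2) ≤ 1 + (p/2) * ((p-1)*ε^2) :=
    rpow_one_add_le_one_add_mul_self (by nlinarith) (by linarith) (by linarith)
  have hB : 1 + (p/2) * ((p-1)*ε^2) ≤ W := by
    have := lemB hp1 hp2 hε0 hε1
    simp only [hW]; nlinarith
  have h1 : (1 + (p-1)*ε^2) ^ (p/2) ≤ W := le_trans hbern hB
  have h2 : ((1 + (p-1)*ε^2) ^ (p/2)) ^ (2/p) ≤ W ^ (2/p) :=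
    Real.rpow_le_rpow (Real.rpow_nonneg hbase _) h1 (by positivity)
  calc 1 + (p-1)*ε^2 = ((1 + (p-1)*ε^2) ^ (p/2)) ^ (2/p) := by
        rw [← Real.rpow_mul hbase]
        rw [show p/2 * (2/p) = 1 by field_simp]
        exact (Real.rpow_one _).symm
    _ ≤ W ^ (2/p) := h2

lemma norm_lb {p f0 f1 : ℝ} (hp1 : 1 ≤ p) (hp2 : p ≤ 2) (h1 : 0 ≤ f1) (h10 : f1 ≤ f0) :
    ((f0+f1)/2)^2 + (p-1)*((f0-f1)/2)^2 ≤ ((f0 ^ p + f1 ^ p)/2) ^ (2/p) := by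
  have hp0 : (0:ℝ) < p := by linarith
  have h0 : 0 ≤ f0 := le_trans h1 h10
  rcases eq_or_lt_of_le h0 with h|h
  · have hf0 : f0 = 0 := h.symm
    have hf1 : f1 = 0 := le_antisymm (hf0 ▸ h10) h1
    rw [hf0, hf1]
    rw [Real.zero_rpow hp0.ne']
    norm_num
    positivity
  · have hE : (0:ℝ) < (f0+f1)/2 := by linarith
    set E : ℝ := (f0+f1)/2 with hEdef
    set ε : ℝ := (f0-f1)/(f0+f1) with hεdef
    have hεsum : (0:ℝ) < f0 + f1 := by linarith
    have hε0 : 0 ≤ ε := div_nonneg (by linarith) hεsum.le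
    have hε1 : ε ≤ 1 := by rw [div_le_one hεsum]; linarith
    have hf0e : f0 = E * (1+ε) := by rw [hEdef, hεdef]; field_simp; ring
    have hf1e : f1 = E * (1-ε) := by rw [hEdef, hεdef]; field_simp; ring
    have hfd : (f0-f1)/2 = E * ε := by rw [hEdef, hεdef]; field_simp
    have h1e : (0:ℝ) ≤ 1 + ε := by linarith
    have h2e : (0:ℝ) ≤ 1 - ε := by linarith
    have hrw : (f0 ^ p + f1 ^ p)/2 = E ^ p * (((1+ε) ^ p + (1-ε) ^ p)/2) := by
      rw [hf0e, hf1e, Real.mul_rpow hE.le h1e, Real.mul_rpow hE.le h2e]; ring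
    have hWnn : (0:ℝ) ≤ ((1+ε) ^ p + (1-ε) ^ p)/2 := by
      have := Real.rpow_nonneg h1e p
      have := Real.rpow_nonneg h2e p
      positivity
    have hEp : (E ^ p) ^ (2/p) = E^2 := by
      rw [← Real.rpow_mul hE.le, show p * (2/p) = (2:ℝ) by field_simp]
      rw [show (2:ℝ) = ((2:ℕ):ℝ) by norm_num, Real.rpow_natCast]
    rw [hrw, Real.mul_rpow (Real.rpow_nonneg hE.le p) hWnn, hEp, hfd]
    have := step2_eps hp1 hp2 hε0 hε1
    calc E^2 + (p-1)*(E*ε)^2 = E^2 * (1 + (p-1)*ε^2) := by ring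
      _ ≤ E^2 * ((((1+ε) ^ p + (1-ε) ^ p)/2) ^ (2/p)) := by
          apply mul_le_mul_of_nonneg_left this (by positivity)
      _ = E^2 * (((1+ε) ^ p + (1-ε) ^ p)/2) ^ (2/p) := by ring

lemma norm_lb' {p f0 f1 : ℝ} (hp1 : 1 ≤ p) (hp2 : p ≤ 2) (h0 : 0 ≤ f0) (h1 : 0 ≤ f1) :
    ((f0+f1)/2)^2 + (p-1)*((f0-f1)/2)^2 ≤ ((f0 ^ p + f1 ^ p)/2) ^ (2/p) := by
  rcases le_total f1 f0 with h|h
  · exact norm_lb hp1 hp2 h1 h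
  · have := norm_lb hp1 hp2 h0 h
    have e1 : ((f1+f0)/2)^2 + (p-1)*((f1-f0)/2)^2 = ((f0+f1)/2)^2 + (p-1)*((f0-f1)/2)^2 := by ring
    have e2 : (f1 ^ p + f0 ^ p)/2 = (f0 ^ p + f1 ^ p)/2 := by ring
    rwa [e1, e2] at this

lemma cs_aux {rho Ef Eg Df Dg Nf Ng : ℝ} (hρ : 0 ≤ rho) (hNf0 : 0 ≤ Nf) (hNg0 : 0 ≤ Ng)
    (hQf : Ef^2 + rho*Df^2 ≤ Nf^2) (hQg : Eg^2 + rho*Dg^2 ≤ Ng^2) :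
    Ef*Eg + rho*Df*Dg ≤ Nf*Ng := by
  have hL2 : (Ef*Eg + rho*Df*Dg)^2 ≤ (Ef^2 + rho*Df^2) * (Eg^2 + rho*Dg^2) := by
    nlinarith [mul_nonneg hρ (sq_nonneg (Ef*Dg - Eg*Df)), sq_nonneg (Ef*Eg + rho*Df*Dg)]
  have hQf0 : (0:ℝ) ≤ Ef^2 + rho*Df^2 := by positivity
  have hQg0 : (0:ℝ) ≤ Eg^2 + rho*Dg^2 := by positivity
  rcases le_or_gt (Ef*Eg + rho*Df*Dg) 0 with h|h
  · exact le_trans h (mul_nonneg hNf0 hNg0)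
  · have h2 : (Ef*Eg + rho*Df*Dg)^2 ≤ (Nf*Ng)^2 := by
      calc (Ef*Eg + rho*Df*Dg)^2 ≤ (Ef^2 + rho*Df^2) * (Eg^2 + rho*Dg^2) := hL2
        _ ≤ Nf^2 * Ng^2 := mul_le_mul hQf hQg hQg0 (by positivity)
        _ = (Nf*Ng)^2 := by ring
    nlinarith [mul_nonneg hNf0 hNg0]

lemma claimN {p : ℝ} (hp1 : 1 ≤ p) (hp2 : p ≤ 2) {f0 f1 g0 g1 : ℝ}
    (hf0 : 0 ≤ f0) (hf1 : 0 ≤ f1) (hg0 : 0 ≤ g0) (hg1 : 0 ≤ g1) :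
    p*(f0*g0 + f1*g1) + (2-p)*(f0*g1 + f1*g0) ≤
      4 * (((f0 ^ p + f1 ^ p)/2) ^ (1/p)) * (((g0 ^ p + g1 ^ p)/2) ^ (1/p)) := by
  have hp0 : (0:ℝ) < p := by linarith
  have hMf : (0:ℝ) ≤ (f0 ^ p + f1 ^ p)/2 := by
    have := Real.rpow_nonneg hf0 p; have := Real.rpow_nonneg hf1 p; positivity
  have hMg : (0:ℝ) ≤ (g0 ^ p + g1 ^ p)/2 := by
    have := Real.rpow_nonneg hg0 p; have := Real.rpow_nonneg hg1 p; positivity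
  have hNf0 : 0 ≤ ((f0 ^ p + f1 ^ p)/2) ^ (1/p) := Real.rpow_nonneg hMf _
  have hNg0 : 0 ≤ ((g0 ^ p + g1 ^ p)/2) ^ (1/p) := Real.rpow_nonneg hMg _
  have hsqf : ((f0 ^ p + f1 ^ p)/2) ^ (2/p) = (((f0 ^ p + f1 ^ p)/2) ^ (1/p))^2 := by
    rw [← Real.rpow_natCast (((f0 ^ p + f1 ^ p)/2) ^ (1/p)) 2, ← Real.rpow_mul hMf]
    congr 1; push_cast; ring
  have hsqg : ((g0 ^ p + g1 ^ p)/2) ^ (2/p) = (((g0 ^ p + g1 ^ p)/2) ^ (1/p))^2 := by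
    rw [← Real.rpow_natCast (((g0 ^ p + g1 ^ p)/2) ^ (1/p)) 2, ← Real.rpow_mul hMg]
    congr 1; push_cast; ring
  have hQf : ((f0+f1)/2)^2 + (p-1)*((f0-f1)/2)^2 ≤ (((f0 ^ p + f1 ^ p)/2) ^ (1/p))^2 := by
    rw [← hsqf]; exact norm_lb' hp1 hp2 hf0 hf1
  have hQg : ((g0+g1)/2)^2 + (p-1)*((g0-g1)/2)^2 ≤ (((g0 ^ p + g1 ^ p)/2) ^ (1/p))^2 := by
    rw [← hsqg]; exact norm_lb' hp1 hp2 hg0 hg1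
  have hstep := cs_aux (by linarith : (0:ℝ) ≤ p - 1) hNf0 hNg0 hQf hQg
  nlinarith [hstep]

lemma key4 {r s : ℝ} (hr : 0 < r) (hs0 : 0 ≤ s) (hsr : s ≤ r) {a0 a1 b0 b1 : ℝ}
    (ha0 : 0 ≤ a0) (ha1 : 0 ≤ a1) (hb0 : 0 ≤ b0) (hb1 : 0 ≤ b1) :
    r*(a0 ^ ((r+s)/(2*r)) * b0 ^ ((r+s)/(2*r)) + a1 ^ ((r+s)/(2*r)) * b1 ^ ((r+s)/(2*r)))
      + s*(a0 ^ ((r+s)/(2*r)) * b1 ^ ((r+s)/(2*r)) + a1 ^ ((r+s)/(2*r)) * b0 ^ ((r+s)/(2*r)))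
      ≤ (r+s) * (2:ℝ) ^ (-(s/r)) * ((a0+a1)*(b0+b1)) ^ ((r+s)/(2*r)) := by
  have hrs : (0:ℝ) < r + s := by linarith
  set c : ℝ := (r+s)/(2*r) with hc
  set p : ℝ := 2*r/(r+s) with hp
  have hp1 : 1 ≤ p := by rw [hp, le_div_iff₀ hrs]; linarith
  have hp2 : p ≤ 2 := by rw [hp, div_le_iff₀ hrs]; linarith
  have hppos : (0:ℝ) < p := by linarith
  have hcp : c * p = 1 := by rw [hc, hp]; field_simp
  have h1pc : 1/p = c := by
    rw [eq_comm, ← hcp, mul_div_assoc, div_self hppos.ne', mul_one]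
  have hco1 : (r+s)/2 * p = r := by rw [hp]; field_simp
  have hco2 : (r+s)/2 * (2-p) = s := by rw [hp]; field_simp; ring
  have hcc : -(s/r) + (c+c) = 1 := by rw [hc]; field_simp; ring
  clear_value c p
  have hpow : ∀ x : ℝ, 0 ≤ x → (x ^ c) ^ p = x := by
    intro x hx
    rw [← Real.rpow_mul hx, hcp, Real.rpow_one]
  have hN : ∀ x y : ℝ, 0 ≤ x → 0 ≤ y →
      (((x ^ c) ^ p + (y ^ c) ^ p)/2) ^ (1/p) = ((x + y)/2) ^ c := by
    intro x y hx hy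
    rw [hpow x hx, hpow y hy, h1pc]
  have hcl := claimN hp1 hp2 (Real.rpow_nonneg ha0 c) (Real.rpow_nonneg ha1 c)
    (Real.rpow_nonneg hb0 c) (Real.rpow_nonneg hb1 c)
  rw [hN a0 a1 ha0 ha1, hN b0 b1 hb0 hb1] at hcl
  have hmul := mul_le_mul_of_nonneg_left hcl (by linarith : (0:ℝ) ≤ (r+s)/2)
  have hA : (0:ℝ) ≤ a0 + a1 := by linarith
  have hB : (0:ℝ) ≤ b0 + b1 := by linarith
  have hw : (0:ℝ) < (2:ℝ) ^ c := Real.rpow_pos_of_pos two_pos c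
  have hexp : (2:ℝ) ^ (-(s/r)) = 2 / ((2:ℝ) ^ c * (2:ℝ) ^ c) := by
    rw [← Real.rpow_add two_pos, eq_div_iff (by positivity), ← Real.rpow_add two_pos, hcc,
      Real.rpow_one]
  have hRHS : (r+s)/2 * (4 * (((a0+a1)/2) ^ c) * (((b0+b1)/2) ^ c))
      = (r+s) * (2:ℝ) ^ (-(s/r)) * ((a0+a1)*(b0+b1)) ^ c := by
    rw [Real.div_rpow hA (by norm_num), Real.div_rpow hB (by norm_num),
      Real.mul_rpow hA hB, hexp]
    have h2 : ((2:ℝ):ℝ) ^ c = (2:ℝ) ^ c := rfl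
    field_simp
    ring
  calc r*(a0 ^ c * b0 ^ c + a1 ^ c * b1 ^ c) + s*(a0 ^ c * b1 ^ c + a1 ^ c * b0 ^ c)
      = (r+s)/2 * (p*(a0 ^ c * b0 ^ c + a1 ^ c * b1 ^ c)
        + (2-p)*(a0 ^ c * b1 ^ c + a1 ^ c * b0 ^ c)) := by
        rw [mul_add ((r+s)/2), ← mul_assoc, ← mul_assoc, hco1, hco2]
    _ ≤ (r+s)/2 * (4 * (((a0+a1)/2) ^ c) * (((b0+b1)/2) ^ c)) := hmul
    _ = (r+s) * (2:ℝ) ^ (-(s/r)) * ((a0+a1)*(b0+b1)) ^ c := hRHS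

lemma agree_le {n : ℕ} (u v : Fin n → Bool) : agree u v ≤ n := by
  have := Finset.card_filter_le Finset.univ (fun i => u i = v i)
  simpa [agree] using this

lemma agree_cons {n : ℕ} (b b' : Bool) (u v : Fin n → Bool) :
    agree (Fin.cons b u) (Fin.cons b' v) = (if b = b' then 1 else 0) + agree u v := by
  simp only [agree, Finset.card_filter]
  rw [Fin.sum_univ_succ]
  simp [Fin.cons_zero, Fin.cons_succ]

lemma term_eq {n : ℕ} (r s : ℝ) (b b' : Bool) (u v : Fin n → Bool) :
    r ^ (agree (Fin.cons b u) (Fin.cons b' v)) * s ^ ((n+1) - agree (Fin.cons b u) (Fin.cons b' v))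
      = (if b = b' then r else s) * (r ^ (agree u v) * s ^ (n - agree u v)) := by
  have hle : agree u v ≤ n := agree_le u v
  rw [agree_cons]
  by_cases h : b = b'
  · rw [if_pos h, if_pos h]
    have h1 : (n+1) - (1 + agree u v) = n - agree u v := by omega
    rw [h1, add_comm 1 (agree u v), pow_succ]
    ring
  · rw [if_neg h, if_neg h]
    have h1 : (n+1) - (0 + agree u v) = (n - agree u v) + 1 := by omega
    rw [h1, zero_add, pow_succ]
    ring

def fib {γ : Type*} [DecidableEq γ] (b : Bool) (S : Finset (Bool × γ)) : Finset γ :=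
  (S.filter (fun z => z.1 = b)).image Prod.snd

lemma sum_fib_part {γ : Type*} [DecidableEq γ] (b : Bool) (S : Finset (Bool × γ)) (g : Bool × γ → ℝ) :
    ∑ u ∈ fib b S, g (b, u) = ∑ z ∈ S.filter (fun z => z.1 = b), g z := by
  rw [fib, Finset.sum_image]
  · apply Finset.sum_congr rfl
    intro z hz
    have hzb := (Finset.mem_filter.mp hz).2
    rw [← hzb]
  · intro z1 h1 z2 h2 h
    have e1 := (Finset.mem_filter.mp h1).2
    have e2 := (Finset.mem_filter.mp h2).2
    exact Prod.ext (e1.trans e2.symm) h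

lemma sum_fib {γ : Type*} [DecidableEq γ] (S : Finset (Bool × γ)) (g : Bool × γ → ℝ) :
    ∑ z ∈ S, g z = (∑ u ∈ fib false S, g (false, u)) + ∑ u ∈ fib true S, g (true, u) := by
  rw [sum_fib_part, sum_fib_part,
    ← Finset.sum_filter_add_sum_filter_not S (fun z => z.1 = false)]
  congr 1
  apply Finset.sum_congr _ (fun _ _ => rfl)
  apply Finset.filter_congr
  intro z _
  simp

lemma card_fib {γ : Type*} [DecidableEq γ] (S : Finset (Bool × γ)) :
    S.card = (fib false S).card + (fib true S).card := by
  have h : ∀ b, (fib b S).card = (S.filter (fun z => z.1 = b)).card := by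
    intro b
    apply Finset.card_image_of_injOn
    intro z1 h1 z2 h2 h
    have e1 := (Finset.mem_filter.mp h1).2
    have e2 := (Finset.mem_filter.mp h2).2
    exact Prod.ext (e1.trans e2.symm) h
  rw [h, h, ← Finset.card_filter_add_card_filter_not (s := S) (p := fun z => z.1 = false)]
  congr 1
  apply Finset.card_nbij' id id <;> simp [Set.MapsTo, Set.LeftInvOn, Set.RightInvOn, Set.EqOn]

def boolEquiv (n : ℕ) : (Fin (n+1) → Bool) ≃ Bool × (Fin n → Bool) where
  toFun x := (x 0, Fin.tail x)
  invFun z := Fin.cons z.1 z.2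
  left_inv x := Fin.cons_self_tail x
  right_inv z := by simp

lemma sum_equiv_image {α β : Type*} [DecidableEq β] (e : α ≃ β) (S : Finset α) (f : α → ℝ) :
    ∑ x ∈ S, f x = ∑ z ∈ S.image e, f (e.symm z) := by
  rw [Finset.sum_image (fun a _ b _ h => e.injective h)]
  simp

lemma main_bound (r s : ℝ) (hr : 0 < r) (hs0 : 0 ≤ s) (hsr : s ≤ r) :
    ∀ n : ℕ, ∀ S T : Finset (Fin n → Bool),
    (∑ x ∈ S, ∑ y ∈ T, r ^ (agree x y) * s ^ (n - agree x y))
      ≤ ((r+s) * (2:ℝ) ^ (-(s/r))) ^ n * (((S.card : ℝ) * T.card) ^ ((r+s)/(2*r))) := by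
  have hc : 0 < (r+s)/(2*r) := by positivity
  intro n
  induction n with
  | zero =>
    intro S T
    have hag : ∀ x y : Fin 0 → Bool, agree x y = 0 := fun x y => by simp [agree]
    have hLHS : (∑ x ∈ S, ∑ y ∈ T, r ^ (agree x y) * s ^ (0 - agree x y))
        = (S.card : ℝ) * T.card := by
      simp [hag]
    rw [hLHS, pow_zero, one_mul]
    have hS : S.card ≤ 1 := Finset.card_le_one.mpr
      (fun a _ b _ => funext fun i => i.elim0)
    have hT : T.card ≤ 1 := Finset.card_le_one.mpr
      (fun a _ b _ => funext fun i => i.elim0)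
    rcases Nat.le_one_iff_eq_zero_or_eq_one.mp hS with h|h <;>
      rcases Nat.le_one_iff_eq_zero_or_eq_one.mp hT with h'|h' <;>
        simp [h, h', Real.zero_rpow hc.ne', Real.one_rpow]
  | succ n ih =>
    intro S T
    set e := boolEquiv n with he
    set S' := S.image e with hS'def
    set T' := T.image e with hT'def
    set S0 := fib false S' with hS0
    set S1 := fib true S' with hS1
    set T0 := fib false T' with hT0
    set T1 := fib true T' with hT1
    set f : (Fin (n+1) → Bool) → (Fin (n+1) → Bool) → ℝ :=
      fun x y => r ^ (agree x y) * s ^ ((n+1) - agree x y) with hf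
    have hterm : ∀ (b b' : Bool) u v,
        f (e.symm (b,u)) (e.symm (b',v))
          = (if b = b' then r else s) * (r ^ (agree u v) * s ^ (n - agree u v)) := by
      intro b b' u v
      show f (Fin.cons b u) (Fin.cons b' v) = _
      rw [hf]
      exact term_eq r s b b' u v
    have hinner : ∀ x : Fin (n+1) → Bool, (∑ y ∈ T, f x y)
        = (∑ v ∈ T0, f x (e.symm (false, v))) + ∑ v ∈ T1, f x (e.symm (true, v)) := by
      intro x
      rw [sum_equiv_image e T (fun y => f x y), ← hT'def, sum_fib T' (fun w => f x (e.symm w))]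
    have h1 : (∑ x ∈ S, ∑ y ∈ T, f x y)
        = r * (∑ u ∈ S0, ∑ v ∈ T0, r ^ (agree u v) * s ^ (n - agree u v))
          + s * (∑ u ∈ S0, ∑ v ∈ T1, r ^ (agree u v) * s ^ (n - agree u v))
          + (s * (∑ u ∈ S1, ∑ v ∈ T0, r ^ (agree u v) * s ^ (n - agree u v))
          + r * (∑ u ∈ S1, ∑ v ∈ T1, r ^ (agree u v) * s ^ (n - agree u v))) := by
      rw [sum_equiv_image e S (fun x => ∑ y ∈ T, f x y), ← hS'def,
        sum_fib S' (fun z => ∑ y ∈ T, f (e.symm z) y)]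
      simp only [hinner, hterm, reduceIte, Bool.false_eq_true, Bool.true_eq_false, if_true,
        if_false]
      rw [← hS0, ← hS1]
      simp only [← Finset.mul_sum]
      rw [Finset.sum_add_distrib, Finset.sum_add_distrib, ← Finset.mul_sum, ← Finset.mul_sum,
        ← Finset.mul_sum, ← Finset.mul_sum]
    set c : ℝ := (r+s)/(2*r) with hcdef
    set Cn : ℝ := ((r+s) * (2:ℝ) ^ (-(s/r))) ^ n with hCn
    have hCn0 : 0 ≤ Cn := by positivity
    have h00 := ih S0 T0
    have h01 := ih S0 T1
    have h10 := ih S1 T0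
    have h11 := ih S1 T1
    have hsplit : ∀ (A B : Finset (Fin n → Bool)),
        (((A.card : ℝ) * B.card) ^ c) = (A.card : ℝ) ^ c * (B.card : ℝ) ^ c := fun A B =>
      Real.mul_rpow (Nat.cast_nonneg _) (Nat.cast_nonneg _)
    rw [hsplit] at h00 h01 h10 h11
    have hkey := key4 hr hs0 hsr (Nat.cast_nonneg S0.card) (Nat.cast_nonneg S1.card)
      (Nat.cast_nonneg T0.card) (Nat.cast_nonneg T1.card)
    rw [← hcdef] at hkey
    have hcard : ((S0.card : ℝ) + S1.card) * ((T0.card : ℝ) + T1.card)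
        = (S.card : ℝ) * T.card := by
      have h1 : S.card = S0.card + S1.card := by
        rw [hS0, hS1, ← card_fib S', hS'def, Finset.card_image_of_injective S e.injective]
      have h2 : T.card = T0.card + T1.card := by
        rw [hT0, hT1, ← card_fib T', hT'def, Finset.card_image_of_injective T e.injective]
      rw [h1, h2]
      push_cast
      ring
    have b00 := mul_le_mul_of_nonneg_left h00 hr.le
    have b01 := mul_le_mul_of_nonneg_left h01 hs0
    have b10 := mul_le_mul_of_nonneg_left h10 hs0
    have b11 := mul_le_mul_of_nonneg_left h11 hr.le
    have hkey' := mul_le_mul_of_nonneg_left hkey hCn0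
    calc (∑ x ∈ S, ∑ y ∈ T, f x y)
        = r * (∑ u ∈ S0, ∑ v ∈ T0, r ^ (agree u v) * s ^ (n - agree u v))
          + s * (∑ u ∈ S0, ∑ v ∈ T1, r ^ (agree u v) * s ^ (n - agree u v))
          + (s * (∑ u ∈ S1, ∑ v ∈ T0, r ^ (agree u v) * s ^ (n - agree u v))
          + r * (∑ u ∈ S1, ∑ v ∈ T1, r ^ (agree u v) * s ^ (n - agree u v))) := h1
      _ ≤ Cn * (r*((S0.card : ℝ) ^ c * (T0.card : ℝ) ^ c + (S1.card : ℝ) ^ c * (T1.card : ℝ) ^ c)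
          + s*((S0.card : ℝ) ^ c * (T1.card : ℝ) ^ c + (S1.card : ℝ) ^ c * (T0.card : ℝ) ^ c)) := by
          nlinarith [b00, b01, b10, b11]
      _ ≤ Cn * ((r+s) * (2:ℝ) ^ (-(s/r))
          * ((((S0.card : ℝ) + S1.card) * (((T0.card : ℝ) + T1.card))) ^ c)) := hkey'
      _ = ((r+s) * (2:ℝ) ^ (-(s/r))) ^ (n+1) * (((S.card : ℝ) * T.card) ^ c) := by
          rw [hcard, pow_succ, hCn]
          ring

/-- Integer-parameter form of the Boolean hypercontractive inequality. -/
theorem counting_form (n : ℕ) (r s : ℕ) (hr : 1 ≤ r) (hs : s ≤ r)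
    (S T : Finset (Fin n → Bool)) (hS : S.Nonempty) (hT : T.Nonempty) :
    Real.logb 2 (∑ x ∈ S, ∑ y ∈ T, (r:ℝ) ^ (agree x y) * (s:ℝ) ^ (n - agree x y))
      ≤ n * (Real.logb 2 ((r:ℝ)+s) - (s:ℝ)/r)
        + (((r:ℝ)+s)/(2*r)) * (Real.logb 2 S.card + Real.logb 2 T.card) := by
  have hr1 : (1:ℝ) ≤ (r:ℝ) := by exact_mod_cast hr
  have hrpos : (0:ℝ) < r := by linarith
  have hs0 : (0:ℝ) ≤ (s:ℝ) := Nat.cast_nonneg s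
  have hsr : (s:ℝ) ≤ r := by exact_mod_cast hs
  have hmain := main_bound (r:ℝ) (s:ℝ) hrpos hs0 hsr n S T
  have hrs : (0:ℝ) < (r:ℝ) + s := by linarith
  have hC1 : (1:ℝ) ≤ ((r:ℝ)+s) * (2:ℝ) ^ (-((s:ℝ)/r)) := by
    rcases Nat.eq_zero_or_pos s with h|h
    · subst h
      simp only [Nat.cast_zero, add_zero, zero_div, neg_zero, Real.rpow_zero, mul_one]
      exact hr1
    · have hs1 : (1:ℝ) ≤ (s:ℝ) := by exact_mod_cast h
      have h2 : ((2:ℝ)) ^ ((s:ℝ)/r) ≤ 2 := by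
        calc (2:ℝ) ^ ((s:ℝ)/r) ≤ (2:ℝ) ^ (1:ℝ) :=
              Real.rpow_le_rpow_of_exponent_le (by norm_num)
                (by rw [div_le_one hrpos]; exact hsr)
          _ = 2 := Real.rpow_one 2
      have hp : (0:ℝ) < (2:ℝ) ^ ((s:ℝ)/r) := Real.rpow_pos_of_pos two_pos _
      rw [Real.rpow_neg (by norm_num), ← div_eq_mul_inv, le_div_iff₀ hp, one_mul]
      linarith
  have hCpos : (0:ℝ) < ((r:ℝ)+s) * (2:ℝ) ^ (-((s:ℝ)/r)) := by linarith
  have hScard : (1:ℝ) ≤ (S.card : ℝ) := by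
    have := Finset.card_pos.mpr hS; exact_mod_cast this
  have hTcard : (1:ℝ) ≤ (T.card : ℝ) := by
    have := Finset.card_pos.mpr hT; exact_mod_cast this
  have hX1 : (1:ℝ) ≤ (S.card : ℝ) * T.card := by nlinarith
  have hXpos : (0:ℝ) < (S.card : ℝ) * T.card := by linarith
  set c : ℝ := ((r:ℝ)+s)/(2*r) with hcdef
  have hc0 : 0 ≤ c := by positivity
  have hXc1 : (1:ℝ) ≤ ((S.card : ℝ) * T.card) ^ c := by
    calc (1:ℝ) = (1:ℝ) ^ c := (Real.one_rpow c).symm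
      _ ≤ ((S.card : ℝ) * T.card) ^ c := Real.rpow_le_rpow (by norm_num) hX1 hc0
  have hbound1 : (1:ℝ) ≤ (((r:ℝ)+s) * (2:ℝ) ^ (-((s:ℝ)/r))) ^ n
      * (((S.card : ℝ) * T.card) ^ c) := by
    have h1 : (1:ℝ) ≤ (((r:ℝ)+s) * (2:ℝ) ^ (-((s:ℝ)/r))) ^ n := one_le_pow₀ hC1
    nlinarith
  have hlog : Real.logb 2 (∑ x ∈ S, ∑ y ∈ T, (r:ℝ) ^ (agree x y) * (s:ℝ) ^ (n - agree x y))
      ≤ Real.logb 2 ((((r:ℝ)+s) * (2:ℝ) ^ (-((s:ℝ)/r))) ^ n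
        * (((S.card : ℝ) * T.card) ^ c)) := by
    have hsum0 : (0:ℝ) ≤ ∑ x ∈ S, ∑ y ∈ T, (r:ℝ) ^ (agree x y) * (s:ℝ) ^ (n - agree x y) := by
      apply Finset.sum_nonneg; intro x _; apply Finset.sum_nonneg; intro y _; positivity
    rcases eq_or_lt_of_le hsum0 with h|h
    · rw [← h, Real.logb_zero]
      exact Real.logb_nonneg one_lt_two hbound1
    · exact Real.logb_le_logb_of_le one_lt_two h hmain
  refine le_trans hlog ?_
  have hCn0 : (((r:ℝ)+s) * (2:ℝ) ^ (-((s:ℝ)/r))) ^ n ≠ 0 := by positivity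
  have hXc0 : (((S.card : ℝ) * T.card) ^ c) ≠ 0 := by positivity
  rw [Real.logb_mul hCn0 hXc0, Real.logb_pow,
    Real.logb_mul hrs.ne' (by positivity : (2:ℝ) ^ (-((s:ℝ)/r)) ≠ 0),
    Real.logb_rpow_eq_mul_logb_of_pos hXpos,
    Real.logb_mul (by linarith : (S.card:ℝ) ≠ 0) (by linarith : (T.card:ℝ) ≠ 0)]
  rw [Real.logb_rpow two_pos (by norm_num)]
  ring_nf
  rfl
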